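/- The set of minimizers of ‖x‖₀ over the set {x ∈ ℝ^n : |Φx| = b} is a finite set. -/

import Mathlib

/-- `‖x‖₀`: the number of nonzero components of `x`. -/
noncomputable def norm0 {n : ℕ} (x : Fin n → ℝ) : ℕ :=
  (Finset.univ.filter (fun i => x i ≠ 0)).card

/-- the set of minimizers of `‖·‖₀` over `{x | |Φx| = b}` is finite. -/
theorem stmt_6 {m n : ℕ} (hmn : m ≤ n) (Φ : Matrix (Fin m) (Fin n) ℝ)
    (hrank : Φ.rank = m) (b : Fin m → ℝ) (hb : ∀ j, 0 ≤ b j) :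
    Set.Finite {x : Fin n → ℝ | (∀ j, |Φ.mulVec x j| = b j) ∧
      ∀ y : Fin n → ℝ, (∀ j, |Φ.mulVec y j| = b j) → norm0 x ≤ norm0 y} := by
  classical
  set S := {x : Fin n → ℝ | (∀ j, |Φ.mulVec x j| = b j) ∧
      ∀ y : Fin n → ℝ, (∀ j, |Φ.mulVec y j| = b j) → norm0 x ≤ norm0 y} with hS
  set f : (Fin n → ℝ) → Finset (Fin n) × (Fin m → Bool) :=
    fun x => (Finset.univ.filter (fun i => x i ≠ 0),
      fun j => decide (0 ≤ Φ.mulVec x j)) with hf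
  have hinj : Set.InjOn f S := by
    rintro x ⟨hxf, hxm⟩ y ⟨hyf, hym⟩ hfxy
    have hsupp : (Finset.univ.filter (fun i => x i ≠ 0)) =
        (Finset.univ.filter (fun i => y i ≠ 0)) := congrArg Prod.fst hfxy
    have hsign : (fun j => decide (0 ≤ Φ.mulVec x j)) =
        (fun j => decide (0 ≤ Φ.mulVec y j)) := congrArg Prod.snd hfxy
    -- same sign pattern + same abs value ⇒ same image
    have hxy : Φ.mulVec y = Φ.mulVec x := by
      funext j
      have habs : |Φ.mulVec x j| = |Φ.mulVec y j| := by rw [hxf j, hyf j]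
      have hsj : (0 ≤ Φ.mulVec x j) ↔ (0 ≤ Φ.mulVec y j) := by
        have := congrFun hsign j
        simpa using this
      rcases abs_eq_abs.mp habs with h | h
      · exact h.symm
      · by_cases h0 : 0 ≤ Φ.mulVec x j
        · have h0' := hsj.mp h0
          nlinarith
        · have h0' := mt hsj.mpr h0
          nlinarith [not_le.mp h0, not_le.mp h0']
    by_contra hne
    obtain ⟨i, hi⟩ : ∃ i, x i ≠ y i := by
      by_contra hall; push_neg at hall; exact hne (funext hall)
    have hxi : x i ≠ 0 := by
      intro h0
      have : i ∉ Finset.univ.filter (fun i => x i ≠ 0) := by simp [h0]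
      rw [hsupp] at this
      simp at this
      exact hi (h0.trans this.symm)
    set t : ℝ := x i / (x i - y i) with ht
    set z : Fin n → ℝ := fun j => x j + t * (y j - x j) with hz
    have hzfeas : ∀ j, |Φ.mulVec z j| = b j := by
      intro j
      have hzeq : z = x + t • (y - x) := by funext k; simp [hz, smul_eq_mul]
      have : Φ.mulVec z = Φ.mulVec x := by
        rw [hzeq, Matrix.mulVec_add, Matrix.mulVec_smul, Matrix.mulVec_sub, hxy]
        simp
      rw [this]; exact hxf j
    have hzi : z i = 0 := by
      have hd : x i - y i ≠ 0 := sub_ne_zero.mpr hi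
      simp only [hz, ht]
      rw [show y i - x i = -(x i - y i) by ring, mul_neg, div_mul_cancel₀ _ hd]
      ring
    have hsub : (Finset.univ.filter (fun j => z j ≠ 0)) ⊆
        (Finset.univ.filter (fun j => x j ≠ 0)).erase i := by
      intro j hj
      simp only [Finset.mem_filter, Finset.mem_univ, true_and] at hj
      rcases eq_or_ne j i with rfl | hji
      · exact absurd hzi hj
      · refine Finset.mem_erase.mpr ⟨hji, ?_⟩
        simp only [Finset.mem_filter, Finset.mem_univ, true_and]
        intro hx0
        apply hj
        have : j ∉ Finset.univ.filter (fun i => x i ≠ 0) := by simp [hx0]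
        rw [hsupp] at this
        simp only [Finset.mem_filter, Finset.mem_univ, true_and, not_not] at this
        simp [hz, hx0, this]
    have hmemi : i ∈ Finset.univ.filter (fun j => x j ≠ 0) := by simp [hxi]
    have hlt : norm0 z < norm0 x := by
      unfold norm0
      calc (Finset.univ.filter (fun j => z j ≠ 0)).card
          ≤ ((Finset.univ.filter (fun j => x j ≠ 0)).erase i).card :=
            Finset.card_le_card hsub
        _ < (Finset.univ.filter (fun j => x j ≠ 0)).card :=
            Finset.card_erase_lt_of_mem hmemi
    exact absurd (hxm z hzfeas) (not_le.mpr hlt)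
  have := Set.Finite.of_finite_image (Set.toFinite (f '' S)) hinj
  exact this
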